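/- Suppose D(m) = Σ_{i∈ℕᵏ} (m^i / i!) D^{(i)} (a finite sum of End(W)-valued coefficients, m ∈ ℤᵏ with coordinates m₁,…,m_k, m^i = m₁^{i₁}⋯m_k^{i_k}) satisfies [D(s), D(m)] = (m−s)D(s+m) − m·D(m) + s·D(s) for all s, m ∈ ℤᵏ. Then the coefficients satisfy [D^{(i)}, D^{(j)}] = Σ_{l=1}^k (j_l − i_l)ε_l · D^{(i+j−ε_l)} for i, j ∈ ℕᵏ∖{0}, and [D^{(i)}, D^{(j)}] = 0 if i = 0 or j = 0. -/

import Mathlib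

open Finset

/-! ### Auxiliary extraction lemmas -/

lemma aux_onevar (T : Finset ℕ) (c : ℕ → ℂ)
    (h : ∀ n : ℤ, ∑ d ∈ T, (n : ℂ) ^ d * c d = 0) : ∀ d ∈ T, c d = 0 := by
  set P : Polynomial ℂ := ∑ d ∈ T, Polynomial.C (c d) * Polynomial.X ^ d with hP
  have hPz : P = 0 := by
    apply Polynomial.eq_zero_of_infinite_isRoot
    apply Set.Infinite.mono (s := Set.range (fun n : ℤ => (n : ℂ)))
    · rintro _ ⟨n, rfl⟩
      simp only [Set.mem_setOf_eq, Polynomial.IsRoot, hP, Polynomial.eval_finset_sum,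
        Polynomial.eval_mul, Polynomial.eval_C, Polynomial.eval_pow, Polynomial.eval_X]
      rw [← h n]
      exact Finset.sum_congr rfl fun d _ => mul_comm _ _
    · exact Set.infinite_range_of_injective Int.cast_injective
  intro d hd
  have h2 := congrArg (fun p => Polynomial.coeff p d) hPz
  simp only [hP, Polynomial.finset_sum_coeff, Polynomial.coeff_C_mul, Polynomial.coeff_X_pow,
    Polynomial.coeff_zero, mul_ite, mul_one, mul_zero] at h2
  rwa [Finset.sum_ite_eq T d c, if_pos hd] at h2

lemma sum_box_succ {M : Type*} [AddCommMonoid M] (k N : ℕ) (f : (Fin (k+1) → ℕ) → M) :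
    ∑ i ∈ Fintype.piFinset (fun _ : Fin (k+1) => Finset.range N), f i
      = ∑ d ∈ Finset.range N, ∑ i' ∈ Fintype.piFinset (fun _ : Fin k => Finset.range N),
          f (Fin.cons d i') := by
  rw [← Finset.sum_product']
  apply Finset.sum_nbij' (i := fun g => (g 0, Fin.tail g)) (j := fun p => Fin.cons p.1 p.2)
  · intro a ha
    simp only [Finset.mem_product, Fintype.mem_piFinset] at ha ⊢
    exact ⟨ha 0, fun l => ha l.succ⟩
  · intro p hp
    simp only [Finset.mem_product, Fintype.mem_piFinset] at hp ⊢
    intro l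
    refine Fin.cases ?_ ?_ l
    · simpa using hp.1
    · intro t; simpa using hp.2 t
  · intro a _; exact Fin.cons_self_tail a
  · intro p _; simp
  · intro a _; rw [Fin.cons_self_tail a]

lemma aux_multivar : ∀ (k : ℕ) (N : ℕ) (c : (Fin k → ℕ) → ℂ),
    (∀ m : Fin k → ℤ,
      ∑ i ∈ Fintype.piFinset (fun _ : Fin k => Finset.range N), (∏ l, (m l : ℂ) ^ (i l)) * c i = 0)
    → ∀ i ∈ Fintype.piFinset (fun _ : Fin k => Finset.range N), c i = 0 := by
  intro k
  induction k with
  | zero =>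
    intro N c h i _
    have h0 := h 0
    rw [Fintype.piFinset_of_isEmpty] at h0
    have : Finset.univ = ({i} : Finset (Fin 0 → ℕ)) := by
      apply Finset.eq_singleton_iff_unique_mem.2
      exact ⟨Finset.mem_univ _, fun x _ => Subsingleton.elim x i⟩
    rw [this, Finset.sum_singleton] at h0
    simpa using h0
  | succ k ih =>
    intro N c h i hi
    have key : ∀ d ∈ Finset.range N, ∀ i' ∈ Fintype.piFinset (fun _ : Fin k => Finset.range N),
        c (Fin.cons d i') = 0 := by
      intro d hd i' hi'
      refine ih N (fun i' => c (Fin.cons d i')) ?_ i' hi'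
      intro m'
      refine aux_onevar (Finset.range N)
        (fun d => ∑ i' ∈ Fintype.piFinset (fun _ : Fin k => Finset.range N),
          (∏ l, (m' l : ℂ) ^ (i' l)) * c (Fin.cons d i')) ?_ d hd
      intro n
      have hn := h (Fin.cons n m')
      rw [sum_box_succ] at hn
      rw [← hn]
      apply Finset.sum_congr rfl
      intro d' _
      rw [Finset.mul_sum]
      apply Finset.sum_congr rfl
      intro i' _
      rw [← mul_assoc]
      congr 1
      rw [Fin.prod_univ_succ]
      simp [mul_comm]
    have := key (i 0) (by simpa using (Fintype.mem_piFinset.1 hi 0)) (Fin.tail i)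
      (Fintype.mem_piFinset.2 fun l => by simpa [Fin.tail] using (Fintype.mem_piFinset.1 hi l.succ))
    rwa [Fin.cons_self_tail] at this

lemma vec_extract {V : Type*} [AddCommGroup V] [Module ℂ V] (k N : ℕ)
    (c : (Fin k → ℕ) → V)
    (h : ∀ m : Fin k → ℤ, ∑ i ∈ Fintype.piFinset (fun _ : Fin k => Finset.range N),
      (∏ l, (m l : ℂ) ^ (i l)) • c i = 0) :
    ∀ i ∈ Fintype.piFinset (fun _ : Fin k => Finset.range N), c i = 0 := by
  intro i hi
  rw [← Module.forall_dual_apply_eq_zero_iff ℂ]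
  intro φ
  refine aux_multivar k N (fun i => φ (c i)) ?_ i hi
  intro m
  have h2 := congrArg φ (h m)
  simpa [map_sum, map_smul, smul_eq_mul] using h2

lemma vec_extract' {V : Type*} [AddCommGroup V] [Module ℂ V] (k N : ℕ)
    (c : (Fin k → ℕ) → V)
    (h : ∀ m : Fin k → ℤ, ∑ i ∈ Fintype.piFinset (fun _ : Fin k => Finset.range N),
      (∏ l, (m l : ℂ) ^ (i l) / (Nat.factorial (i l))) • c i = 0) :
    ∀ i ∈ Fintype.piFinset (fun _ : Fin k => Finset.range N), c i = 0 := by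
  intro i hi
  have key := vec_extract k N (fun i => (∏ l, (1 / ((Nat.factorial (i l) : ℂ)))) • c i) ?_ i hi
  · rcases smul_eq_zero.1 key with h0 | h0
    · exact absurd h0 (Finset.prod_ne_zero_iff.2 fun l _ =>
        one_div_ne_zero (Nat.cast_ne_zero.2 (Nat.factorial_ne_zero _)))
    · exact h0
  · intro m
    rw [← h m]
    apply Finset.sum_congr rfl
    intro j _
    rw [smul_smul, ← Finset.prod_mul_distrib]
    congr 1
    apply Finset.prod_congr rfl
    intro l _
    rw [mul_one_div]

lemma vec_extract2 {V : Type*} [AddCommGroup V] [Module ℂ V] (k N : ℕ)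
    (c : (Fin k → ℕ) → (Fin k → ℕ) → V)
    (h : ∀ s m : Fin k → ℤ, ∑ i ∈ Fintype.piFinset (fun _ : Fin k => Finset.range N),
      ∑ j ∈ Fintype.piFinset (fun _ : Fin k => Finset.range N),
      ((∏ l, (s l : ℂ) ^ (i l) / (Nat.factorial (i l))) *
        (∏ l, (m l : ℂ) ^ (j l) / (Nat.factorial (j l)))) • c i j = 0) :
    ∀ i ∈ Fintype.piFinset (fun _ : Fin k => Finset.range N),
    ∀ j ∈ Fintype.piFinset (fun _ : Fin k => Finset.range N), c i j = 0 := by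
  intro i hi j hj
  have step1 : ∀ s : Fin k → ℤ, ∀ j ∈ Fintype.piFinset (fun _ : Fin k => Finset.range N),
      ∑ i ∈ Fintype.piFinset (fun _ : Fin k => Finset.range N),
        (∏ l, (s l : ℂ) ^ (i l) / (Nat.factorial (i l))) • c i j = 0 := by
    intro s
    apply vec_extract' k N
    intro m
    have h2 := h s m
    rw [Finset.sum_comm] at h2
    rw [← h2]
    apply Finset.sum_congr rfl
    intro j' _
    rw [Finset.smul_sum]
    apply Finset.sum_congr rfl
    intro i' _
    rw [smul_smul, mul_comm]
  exact vec_extract' k N (fun i => c i j) (fun s => step1 s j hj) i hi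

/-! ### The polynomial coefficients -/

noncomputable def mcoef {k : ℕ} (m : Fin k → ℤ) (i : Fin k → ℕ) : ℂ :=
  ∏ l, (m l : ℂ) ^ (i l) / (Nat.factorial (i l))

lemma mcoef_zero {k : ℕ} (m : Fin k → ℤ) : mcoef m 0 = 1 := by
  simp [mcoef]

lemma mcoef_succ_single {k : ℕ} (m : Fin k → ℤ) (j : Fin k → ℕ) (l : Fin k) :
    ((j l : ℂ) + 1) * mcoef m (j + Pi.single l 1) = (m l : ℂ) * mcoef m j := by
  classical
  unfold mcoef
  rw [← Finset.mul_prod_erase Finset.univ _ (Finset.mem_univ l),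
      ← Finset.mul_prod_erase Finset.univ
        (fun l' => (m l' : ℂ) ^ (j l') / (Nat.factorial (j l'))) (Finset.mem_univ l)]
  have hrest : ∏ l' ∈ Finset.univ.erase l,
      (m l' : ℂ) ^ ((j + Pi.single l 1 : Fin k → ℕ) l') / (Nat.factorial ((j + Pi.single l 1 : Fin k → ℕ) l'))
      = ∏ l' ∈ Finset.univ.erase l, (m l' : ℂ) ^ (j l') / (Nat.factorial (j l')) := by
    apply Finset.prod_congr rfl
    intro l' hl'
    have : (j + Pi.single l 1 : Fin k → ℕ) l' = j l' := by
      simp [Pi.single_eq_of_ne (Finset.mem_erase.1 hl').1]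
    rw [this]
  rw [hrest, ← mul_assoc, ← mul_assoc]
  congr 1
  have hl : (j + Pi.single l 1 : Fin k → ℕ) l = j l + 1 := by simp
  rw [hl]
  have h1 : (Nat.factorial (j l + 1) : ℂ) = ((j l : ℂ) + 1) * (Nat.factorial (j l)) := by
    rw [Nat.factorial_succ]; push_cast; ring
  have h2 : (Nat.factorial (j l) : ℂ) ≠ 0 := Nat.cast_ne_zero.2 (Nat.factorial_ne_zero _)
  have h3 : ((j l : ℂ) + 1) ≠ 0 := by
    intro h
    have h4 := congrArg Complex.re h
    simp at h4
    have : (0:ℝ) ≤ (j l : ℝ) := Nat.cast_nonneg _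
    linarith
  field_simp [h1]
  rw [h1]
  ring

lemma binom_div (a b : ℂ) (n : ℕ) :
    (a + b) ^ n / (Nat.factorial n) =
      ∑ t ∈ Finset.range (n + 1),
        (a ^ t / (Nat.factorial t)) * (b ^ (n - t) / (Nat.factorial (n - t))) := by
  rw [add_pow, Finset.sum_div]
  apply Finset.sum_congr rfl
  intro t ht
  have htn : t ≤ n := Nat.lt_succ_iff.1 (Finset.mem_range.1 ht)
  rw [Nat.cast_choose ℂ htn]
  have h1 : (Nat.factorial n : ℂ) ≠ 0 := Nat.cast_ne_zero.2 (Nat.factorial_ne_zero _)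
  have h2 : (Nat.factorial t : ℂ) ≠ 0 := Nat.cast_ne_zero.2 (Nat.factorial_ne_zero _)
  have h3 : (Nat.factorial (n - t) : ℂ) ≠ 0 := Nat.cast_ne_zero.2 (Nat.factorial_ne_zero _)
  field_simp

lemma mcoef_binom {k : ℕ} (s m : Fin k → ℤ) (p : Fin k → ℕ) :
    mcoef (s + m) p = ∑ i ∈ Fintype.piFinset (fun l => Finset.range (p l + 1)),
      mcoef s i * mcoef m (p - i) := by
  unfold mcoef
  have key : ∀ l, (((s + m) l : ℂ)) ^ (p l) / (Nat.factorial (p l))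
      = ∑ t ∈ Finset.range (p l + 1),
        ((s l : ℂ) ^ t / (Nat.factorial t)) * ((m l : ℂ) ^ (p l - t) / (Nat.factorial (p l - t))) := by
    intro l
    rw [Pi.add_apply, Int.cast_add]
    exact binom_div _ _ _
  rw [Finset.prod_congr rfl (fun l _ => key l), Finset.prod_univ_sum]
  apply Finset.sum_congr rfl
  intro i _
  rw [← Finset.prod_mul_distrib]
  apply Finset.prod_congr rfl
  intro l _
  rfl

lemma bracket_sum_sum {ι κ A : Type*} [Ring A] [Algebra ℂ A]
    (s : Finset ι) (t : Finset κ) (a : ι → ℂ) (b : κ → ℂ) (f : ι → A) (g : κ → A) :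
    ⁅∑ i ∈ s, a i • f i, ∑ j ∈ t, b j • g j⁆
      = ∑ i ∈ s, ∑ j ∈ t, (a i * b j) • ⁅f i, g j⁆ := by
  rw [Ring.lie_def, Finset.sum_mul_sum, Finset.sum_mul_sum, Finset.sum_comm (s := t) (t := s),
    ← Finset.sum_sub_distrib]
  apply Finset.sum_congr rfl
  intro i _
  rw [← Finset.sum_sub_distrib]
  apply Finset.sum_congr rfl
  intro j _
  rw [smul_mul_smul_comm, smul_mul_smul_comm, Ring.lie_def, smul_sub, mul_comm (b j) (a i)]

/-- Suppose `D(m) = Σ_{i∈ℕᵏ} (mⁱ/i!) D⁽ⁱ⁾` (a finite sum, with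
`mⁱ = m₁^{i₁}⋯m_k^{i_k}`, coefficients `D⁽ⁱ⁾ ∈ End(W)`) satisfies
`[D(s), D(m)] = (m−s)D(s+m) − m·D(m) + s·D(s)` for all `s, m ∈ ℤᵏ`, where the scalar
associated to `m` is `Σ_l m_l ε_l` for `ε₁,…,ε_k ∈ ℂ` linearly independent over `ℚ`.
Then `[D⁽ⁱ⁾, D⁽ʲ⁾] = Σ_{l=1}^k (j_l − i_l) ε_l · D⁽ⁱ⁺ʲ⁻ᵉˡ⁾` for `i, j ∈ ℕᵏ∖{0}`
(terms with a negative coordinate being zero, which the vanishing coefficient handles),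
and `[D⁽ⁱ⁾, D⁽ʲ⁾] = 0` if `i = 0` or `j = 0`. -/
theorem stmt5 (k : ℕ) (ε : Fin k → ℂ) (hε : LinearIndependent ℚ ε)
    (W : Type*) [AddCommGroup W] [Module ℂ W] [FiniteDimensional ℂ W]
    (S : Finset (Fin k → ℕ)) (Dc : (Fin k → ℕ) → Module.End ℂ W)
    (hsupp : ∀ i ∉ S, Dc i = 0)
    (D : (Fin k → ℤ) → Module.End ℂ W)
    (hD : ∀ m : Fin k → ℤ,
      D m = ∑ i ∈ S, (∏ l, ((m l : ℂ)) ^ (i l) / (Nat.factorial (i l))) • Dc i)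
    (hbr : ∀ s m : Fin k → ℤ,
      ⁅D s, D m⁆ = ((∑ l, (m l : ℂ) * ε l) - ∑ l, (s l : ℂ) * ε l) • D (s + m)
        - (∑ l, (m l : ℂ) * ε l) • D m + (∑ l, (s l : ℂ) * ε l) • D s) :
    (∀ i j : Fin k → ℕ, i ≠ 0 → j ≠ 0 →
      ⁅Dc i, Dc j⁆ = ∑ l, (((j l : ℂ) - (i l : ℂ)) * ε l) • Dc (i + j - Pi.single l 1)) ∧
    (∀ i j : Fin k → ℕ, i = 0 ∨ j = 0 → ⁅Dc i, Dc j⁆ = 0) := by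
  classical
  set N : ℕ := S.sup fun p => Finset.univ.sup p with hNdef
  set B : Finset (Fin k → ℕ) := Fintype.piFinset (fun _ : Fin k => Finset.range (N+2)) with hBdef
  have hN : ∀ p ∈ S, ∀ l, p l ≤ N := fun p hp l =>
    le_trans (Finset.le_sup (Finset.mem_univ l)) (Finset.le_sup hp)
  have hDc0 : ∀ q : Fin k → ℕ, (∃ l, N < q l) → Dc q = 0 := by
    rintro q ⟨l, hl⟩
    apply hsupp
    intro hq
    exact absurd (hN q hq l) (by omega)
  have hmemB : ∀ q : Fin k → ℕ, q ∈ B ↔ ∀ l, q l < N + 2 := by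
    intro q
    simp [hBdef, Fintype.mem_piFinset]
  have hSB : S ⊆ B := by
    intro p hp
    rw [hmemB]
    intro l
    have := hN p hp l
    omega
  have h0B : (0 : Fin k → ℕ) ∈ B := by
    rw [hmemB]; intro l; simp
  have hD' : ∀ m : Fin k → ℤ, D m = ∑ i ∈ B, mcoef m i • Dc i := by
    intro m
    rw [hD m]
    apply Finset.sum_subset hSB
    intro x _ hx
    rw [hsupp x hx, smul_zero]
  have hlie : ∀ s m : Fin k → ℤ,
      ⁅D s, D m⁆ = ∑ i ∈ B, ∑ j ∈ B, (mcoef s i * mcoef m j) • ⁅Dc i, Dc j⁆ := by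
    intro s m
    rw [hD' s, hD' m]
    exact bracket_sum_sum B B _ _ _ _
  -- Key reindexing identity
  have hK1 : ∀ (m : Fin k → ℤ) (l : Fin k) (i : Fin k → ℕ),
      ∑ j ∈ B, ((j l : ℂ) * mcoef m j) • Dc (i + j - Pi.single l 1)
        = (m l : ℂ) • ∑ j ∈ B, mcoef m j • Dc (i + j) := by
    intro m l i
    have hfil : ∑ j ∈ B.filter (fun j => ¬ j l = 0),
        ((j l : ℂ) * mcoef m j) • Dc (i + j - Pi.single l 1)
        = ∑ j ∈ B, ((j l : ℂ) * mcoef m j) • Dc (i + j - Pi.single l 1) := by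
      apply Finset.sum_filter_of_ne
      intro x _ hne h0
      apply hne
      rw [h0]
      simp
    rw [← hfil, Finset.smul_sum]
    have hsub : ∑ j ∈ B, (m l : ℂ) • (mcoef m j • Dc (i + j))
        = ∑ j ∈ B.filter (fun j => j l < N + 1), (m l : ℂ) • (mcoef m j • Dc (i + j)) := by
      symm
      apply Finset.sum_subset (Finset.filter_subset _ _)
      intro j hjB hj
      rw [Finset.mem_filter, not_and] at hj
      have hjl : N + 1 ≤ j l := by
        have := hj hjB
        omega
      rw [hDc0 (i + j) ⟨l, by simp [Pi.add_apply]; omega⟩, smul_zero, smul_zero]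
    rw [hsub]
    apply Finset.sum_nbij' (i := fun a => a - Pi.single l 1) (j := fun a => a + Pi.single l 1)
    · intro a ha
      rw [Finset.mem_filter] at ha ⊢
      obtain ⟨haB, hal⟩ := ha
      rw [hmemB] at haB ⊢
      constructor
      · intro l'
        have h := haB l'
        by_cases hll : l' = l
        · subst hll; simp [Pi.single_eq_same]; omega
        · simp [Pi.single_eq_of_ne hll]; omega
      · simp only [Pi.sub_apply, Pi.single_eq_same]
        have := haB l
        omega
    · intro a ha
      rw [Finset.mem_filter] at ha ⊢
      obtain ⟨haB, hal⟩ := ha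
      rw [hmemB] at haB ⊢
      constructor
      · intro l'
        by_cases hll : l' = l
        · subst hll; simp [Pi.single_eq_same]; omega
        · simp [Pi.single_eq_of_ne hll]; exact haB l'
      · simp [Pi.single_eq_same]
    · intro a ha
      have hal : a l ≠ 0 := (Finset.mem_filter.1 ha).2
      funext l'
      by_cases hll : l' = l
      · subst hll; simp [Pi.single_eq_same]; omega
      · simp [Pi.single_eq_of_ne hll]
    · intro a _
      funext l'
      by_cases hll : l' = l
      · subst hll; simp [Pi.single_eq_same]
      · simp [Pi.single_eq_of_ne hll]
    · intro a ha
      have hal : a l ≠ 0 := (Finset.mem_filter.1 ha).2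
      have key := mcoef_succ_single m (a - Pi.single l 1) l
      have he : (a - Pi.single l 1) + Pi.single l 1 = a := by
        funext l'
        by_cases hll : l' = l
        · subst hll; simp [Pi.single_eq_same]; omega
        · simp [Pi.single_eq_of_ne hll]
      rw [he] at key
      have hcast : ((a - Pi.single l 1 : Fin k → ℕ) l : ℂ) + 1 = (a l : ℂ) := by
        simp only [Pi.sub_apply, Pi.single_eq_same]
        have : a l - 1 + 1 = a l := by omega
        rw [show ((a l - 1 : ℕ) : ℂ) + 1 = ((a l - 1 + 1 : ℕ) : ℂ) by push_cast; ring, this]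
      rw [hcast] at key
      have harg : i + a - Pi.single l 1 = i + (a - Pi.single l 1) := by
        funext l'
        by_cases hll : l' = l
        · subst hll; simp [Pi.single_eq_same]; omega
        · simp [Pi.single_eq_of_ne hll]
      rw [harg, key, smul_smul]
  -- binomial identity for D (s + m)
  have hK2 : ∀ s m : Fin k → ℤ,
      D (s + m) = ∑ i ∈ B, ∑ j ∈ B, (mcoef s i * mcoef m j) • Dc (i + j) := by
    intro s m
    rw [hD' (s + m)]
    have hA : ∀ p ∈ B, mcoef (s + m) p
        = ∑ i ∈ B, ∑ j ∈ B, (if i + j = p then mcoef s i * mcoef m j else 0) := by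
      intro p hp
      rw [mcoef_binom]
      have hPB : Fintype.piFinset (fun l => Finset.range (p l + 1)) ⊆ B := by
        apply Fintype.piFinset_subset
        intro l
        rw [Finset.range_subset_range]
        have := (hmemB p).1 hp l
        omega
      symm
      have step : ∀ i ∈ B, ∑ j ∈ B, (if i + j = p then mcoef s i * mcoef m j else 0)
          = if i ∈ Fintype.piFinset (fun l => Finset.range (p l + 1))
            then mcoef s i * mcoef m (p - i) else 0 := by
        intro i _
        by_cases hip : i ∈ Fintype.piFinset (fun l => Finset.range (p l + 1))
        · have hle : ∀ l, i l ≤ p l := fun l =>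
            Nat.lt_succ_iff.1 (Finset.mem_range.1 (Fintype.mem_piFinset.1 hip l))
          have hiff : ∀ j : Fin k → ℕ, (i + j = p) ↔ (j = p - i) := by
            intro j
            constructor
            · intro h
              funext l'
              have := congrFun h l'
              simp only [Pi.add_apply] at this
              simp only [Pi.sub_apply]
              omega
            · intro h
              subst h
              funext l'
              simp only [Pi.add_apply, Pi.sub_apply]
              have := hle l'
              omega
          have hmem : p - i ∈ B := by
            rw [hmemB]
            intro l
            have h1 := hle l
            have h2 := (hmemB p).1 hp l
            simp only [Pi.sub_apply]
            omega
          rw [if_pos hip]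
          refine (Finset.sum_eq_single_of_mem (p - i) hmem ?_).trans ?_
          · intro b _ hb
            exact if_neg (fun hc => hb ((hiff b).1 hc))
          · exact if_pos ((hiff (p - i)).2 rfl)
        · rw [if_neg hip]
          apply Finset.sum_eq_zero
          intro j _
          rw [if_neg]
          intro h
          apply hip
          rw [Fintype.mem_piFinset]
          intro l
          rw [Finset.mem_range]
          have := congrFun h l
          simp only [Pi.add_apply] at this
          omega
      rw [Finset.sum_congr rfl step, Finset.sum_ite_mem,
        Finset.inter_eq_right.2 hPB]
    rw [Finset.sum_congr rfl (fun p hp => by rw [hA p hp, Finset.sum_smul])]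
    rw [Finset.sum_congr rfl (fun p (_ : p ∈ B) => Finset.sum_congr rfl
      (fun i (_ : i ∈ B) => Finset.sum_smul))]
    rw [Finset.sum_comm]
    apply Finset.sum_congr rfl
    intro i _
    rw [Finset.sum_comm]
    apply Finset.sum_congr rfl
    intro j _
    have : ∀ p ∈ B, (if i + j = p then mcoef s i * mcoef m j else 0) • Dc p
        = if i + j = p then (mcoef s i * mcoef m j) • Dc p else 0 := by
      intro p _
      split_ifs <;> simp
    rw [Finset.sum_congr rfl this]
    by_cases hB : i + j ∈ B
    · refine (Finset.sum_eq_single_of_mem (i + j) hB ?_).trans ?_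
      · intro b _ hb
        exact if_neg (fun hc => hb hc.symm)
      · exact if_pos rfl
    · rw [Finset.sum_eq_zero (fun p hp => if_neg (fun hc : i + j = p => hB (by rw [hc]; exact hp)))]
      rw [hDc0 (i + j) ?_, smul_zero]
      by_contra hcon
      push_neg at hcon
      apply hB
      rw [hmemB]
      intro l
      have h1 := hcon l
      simp only [Pi.add_apply] at h1 ⊢
      omega
  -- intermediate smul identity
  have hI : ∀ (m : Fin k → ℤ) (i : Fin k → ℕ) (l : Fin k),
      ∑ j ∈ B, (mcoef m j * ((j l : ℂ) * ε l)) • Dc (i + j - Pi.single l 1)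
        = ((m l : ℂ) * ε l) • ∑ j ∈ B, mcoef m j • Dc (i + j) := by
    intro m i l
    have : ∀ j ∈ B, (mcoef m j * ((j l : ℂ) * ε l)) • Dc (i + j - Pi.single l 1)
        = ε l • (((j l : ℂ) * mcoef m j) • Dc (i + j - Pi.single l 1)) := by
      intro j _
      rw [smul_smul]
      congr 1
      ring
    rw [Finset.sum_congr rfl this, ← Finset.smul_sum, hK1 m l i, smul_smul,
      mul_comm (ε l) ((m l : ℂ))]
  -- Step 2
  have hStep2 : ∀ s m : Fin k → ℤ,
      (∑ l, (m l : ℂ) * ε l) • D (s + m)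
        = ∑ i ∈ B, ∑ j ∈ B, (mcoef s i * mcoef m j) •
            (∑ l, ((j l : ℂ) * ε l) • Dc (i + j - Pi.single l 1)) := by
    intro s m
    rw [hK2 s m, Finset.sum_smul]
    have lhs_eq : ∀ l : Fin k, ((m l : ℂ) * ε l) •
        (∑ i ∈ B, ∑ j ∈ B, (mcoef s i * mcoef m j) • Dc (i + j))
        = ∑ i ∈ B, mcoef s i • (((m l : ℂ) * ε l) • ∑ j ∈ B, mcoef m j • Dc (i + j)) := by
      intro l
      rw [Finset.smul_sum]
      apply Finset.sum_congr rfl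
      intro i _
      rw [smul_comm]
      congr 1
      rw [Finset.smul_sum]
      apply Finset.sum_congr rfl
      intro j _
      rw [smul_smul, mul_smul]
    rw [Finset.sum_congr rfl (fun l _ => lhs_eq l), Finset.sum_comm]
    apply Finset.sum_congr rfl
    intro i _
    have rhs_eq : ∀ j ∈ B, (mcoef s i * mcoef m j) •
        (∑ l, ((j l : ℂ) * ε l) • Dc (i + j - Pi.single l 1))
        = ∑ l, mcoef s i • ((mcoef m j * ((j l : ℂ) * ε l)) • Dc (i + j - Pi.single l 1)) := by
      intro j _
      rw [Finset.smul_sum]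
      apply Finset.sum_congr rfl
      intro l _
      rw [smul_smul, smul_smul, mul_assoc]
    rw [Finset.sum_congr rfl rhs_eq, Finset.sum_comm]
    apply Finset.sum_congr rfl
    intro l _
    rw [← Finset.smul_sum, hI m i l]
  -- Step 2'
  have hStep2' : ∀ s m : Fin k → ℤ,
      (∑ l, (s l : ℂ) * ε l) • D (s + m)
        = ∑ i ∈ B, ∑ j ∈ B, (mcoef s i * mcoef m j) •
            (∑ l, ((i l : ℂ) * ε l) • Dc (i + j - Pi.single l 1)) := by
    intro s m
    rw [show s + m = m + s from add_comm s m, hStep2 m s, Finset.sum_comm]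
    apply Finset.sum_congr rfl
    intro i _
    apply Finset.sum_congr rfl
    intro j _
    rw [mul_comm (mcoef m j) (mcoef s i)]
    congr 1
    apply Finset.sum_congr rfl
    intro l _
    rw [show j + i = i + j from add_comm j i]
  -- c2
  set c2 : (Fin k → ℕ) → Module.End ℂ W :=
    fun j => ∑ l, ((j l : ℂ) * ε l) • Dc (j - Pi.single l 1) with hc2def
  -- Step 3
  have hStep3 : ∀ m : Fin k → ℤ,
      (∑ l, (m l : ℂ) * ε l) • D m = ∑ j ∈ B, mcoef m j • c2 j := by
    intro m
    rw [hD' m, Finset.sum_smul]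
    have hI0 : ∀ l : Fin k, ((m l : ℂ) * ε l) • ∑ j ∈ B, mcoef m j • Dc j
        = ∑ j ∈ B, (mcoef m j * ((j l : ℂ) * ε l)) • Dc (j - Pi.single l 1) := by
      intro l
      have := hI m 0 l
      simp only [zero_add] at this
      rw [this]
    rw [Finset.sum_congr rfl (fun l _ => hI0 l), Finset.sum_comm]
    apply Finset.sum_congr rfl
    intro j _
    rw [hc2def, Finset.smul_sum]
    apply Finset.sum_congr rfl
    intro l _
    rw [smul_smul]
  -- lifts to double sums
  have hLift3m : ∀ s m : Fin k → ℤ,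
      ∑ i ∈ B, ∑ j ∈ B, (mcoef s i * mcoef m j) • (if i = 0 then c2 j else 0)
        = (∑ l, (m l : ℂ) * ε l) • D m := by
    intro s m
    rw [hStep3 m]
    have step : ∀ i ∈ B, ∑ j ∈ B, (mcoef s i * mcoef m j) • (if i = 0 then c2 j else 0)
        = if i = 0 then ∑ j ∈ B, (mcoef s i * mcoef m j) • c2 j else 0 := by
      intro i _
      split_ifs with h
      · rfl
      · exact Finset.sum_eq_zero fun j _ => smul_zero _
    rw [Finset.sum_congr rfl step]
    refine (Finset.sum_eq_single_of_mem 0 h0B ?_).trans ?_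
    · intro b _ hb
      exact if_neg hb
    · rw [if_pos rfl]
      apply Finset.sum_congr rfl
      intro j _
      rw [mcoef_zero, one_mul]
  have hLift3s : ∀ s m : Fin k → ℤ,
      ∑ i ∈ B, ∑ j ∈ B, (mcoef s i * mcoef m j) • (if j = 0 then c2 i else 0)
        = (∑ l, (s l : ℂ) * ε l) • D s := by
    intro s m
    rw [hStep3 s]
    have step : ∀ i ∈ B, ∑ j ∈ B, (mcoef s i * mcoef m j) • (if j = 0 then c2 i else 0)
        = mcoef s i • c2 i := by
      intro i _
      have : ∀ j ∈ B, (mcoef s i * mcoef m j) • (if j = 0 then c2 i else 0)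
          = if j = 0 then (mcoef s i * mcoef m j) • c2 i else 0 := by
        intro j _
        split_ifs <;> simp
      rw [Finset.sum_congr rfl this]
      refine (Finset.sum_eq_single_of_mem 0 h0B ?_).trans ?_
      · intro b _ hb
        exact if_neg hb
      · rw [if_pos rfl, mcoef_zero, mul_one]
    exact Finset.sum_congr rfl step
  -- the coefficient family
  set cf : (Fin k → ℕ) → (Fin k → ℕ) → Module.End ℂ W := fun i j =>
    ⁅Dc i, Dc j⁆ - (∑ l, ((j l : ℂ) * ε l) • Dc (i + j - Pi.single l 1))
      + (∑ l, ((i l : ℂ) * ε l) • Dc (i + j - Pi.single l 1))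
      + (if i = 0 then c2 j else 0) - (if j = 0 then c2 i else 0) with hcfdef
  have hZero : ∀ s m : Fin k → ℤ,
      ∑ i ∈ B, ∑ j ∈ B, (mcoef s i * mcoef m j) • cf i j = 0 := by
    intro s m
    have expand : ∑ i ∈ B, ∑ j ∈ B, (mcoef s i * mcoef m j) • cf i j
        = (∑ i ∈ B, ∑ j ∈ B, (mcoef s i * mcoef m j) • ⁅Dc i, Dc j⁆)
          - (∑ i ∈ B, ∑ j ∈ B, (mcoef s i * mcoef m j) •
              (∑ l, ((j l : ℂ) * ε l) • Dc (i + j - Pi.single l 1)))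
          + (∑ i ∈ B, ∑ j ∈ B, (mcoef s i * mcoef m j) •
              (∑ l, ((i l : ℂ) * ε l) • Dc (i + j - Pi.single l 1)))
          + (∑ i ∈ B, ∑ j ∈ B, (mcoef s i * mcoef m j) • (if i = 0 then c2 j else 0))
          - (∑ i ∈ B, ∑ j ∈ B, (mcoef s i * mcoef m j) • (if j = 0 then c2 i else 0)) := by
      simp only [hcfdef, smul_sub, smul_add, Finset.sum_add_distrib, Finset.sum_sub_distrib]
    rw [expand, ← hlie s m, ← hStep2 s m, ← hStep2' s m, hLift3m s m, hLift3s s m,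
      hbr s m, sub_smul]
    abel
  have hcB : ∀ i ∈ B, ∀ j ∈ B, cf i j = 0 := by
    apply vec_extract2 k (N + 2) cf
    intro s m
    exact hZero s m
  have hcAll : ∀ i j : Fin k → ℕ, cf i j = 0 := by
    intro i j
    by_cases hi : i ∈ B
    · by_cases hj : j ∈ B
      · exact hcB i hi j hj
      · -- j has a large coordinate
        rw [hmemB] at hj
        push_neg at hj
        obtain ⟨l0, hl0⟩ := hj
        have hjl0 : N + 2 ≤ j l0 := by omega
        have hDcj : Dc j = 0 := hDc0 j ⟨l0, by omega⟩
        have hsum1 : ∀ l : Fin k, Dc (i + j - Pi.single l 1) = 0 := by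
          intro l
          apply hDc0
          refine ⟨l0, ?_⟩
          simp only [Pi.sub_apply, Pi.add_apply, Pi.single_apply]
          split_ifs <;> omega
        have hj0 : j ≠ 0 := by
          intro h
          have := congrFun h l0
          simp at this
          omega
        have hc2j : (if i = 0 then c2 j else 0) = 0 := by
          split_ifs with h
          · rw [hc2def]
            apply Finset.sum_eq_zero
            intro l _
            rw [hDc0 (j - Pi.single l 1) ⟨l0, by
              simp only [Pi.sub_apply, Pi.single_apply]
              split_ifs <;> omega⟩, smul_zero]
          · rfl
        have hz1 : (∑ l, ((j l : ℂ) * ε l) • Dc (i + j - Pi.single l 1)) = (0 : Module.End ℂ W) :=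
          Finset.sum_eq_zero fun l _ => by rw [hsum1 l, smul_zero]
        have hz2 : (∑ l, ((i l : ℂ) * ε l) • Dc (i + j - Pi.single l 1)) = (0 : Module.End ℂ W) :=
          Finset.sum_eq_zero fun l _ => by rw [hsum1 l, smul_zero]
        simp only [hcfdef, hDcj, lie_zero, hc2j, if_neg hj0, hz1, hz2]
        simp [Ring.lie_def]
    · rw [hmemB] at hi
      push_neg at hi
      obtain ⟨l0, hl0⟩ := hi
      have hil0 : N + 2 ≤ i l0 := by omega
      have hDci : Dc i = 0 := hDc0 i ⟨l0, by omega⟩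
      have hsum1 : ∀ l : Fin k, Dc (i + j - Pi.single l 1) = 0 := by
        intro l
        apply hDc0
        refine ⟨l0, ?_⟩
        simp only [Pi.sub_apply, Pi.add_apply, Pi.single_apply]
        split_ifs <;> omega
      have hi0 : i ≠ 0 := by
        intro h
        have := congrFun h l0
        simp at this
        omega
      have hc2i : (if j = 0 then c2 i else 0) = 0 := by
        split_ifs with h
        · rw [hc2def]
          apply Finset.sum_eq_zero
          intro l _
          rw [hDc0 (i - Pi.single l 1) ⟨l0, by
            simp only [Pi.sub_apply, Pi.single_apply]
            split_ifs <;> omega⟩, smul_zero]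
        · rfl
      have hz1 : (∑ l, ((j l : ℂ) * ε l) • Dc (i + j - Pi.single l 1)) = (0 : Module.End ℂ W) :=
        Finset.sum_eq_zero fun l _ => by rw [hsum1 l, smul_zero]
      have hz2 : (∑ l, ((i l : ℂ) * ε l) • Dc (i + j - Pi.single l 1)) = (0 : Module.End ℂ W) :=
        Finset.sum_eq_zero fun l _ => by rw [hsum1 l, smul_zero]
      have hc2j2 : (if i = 0 then c2 j else 0) = (0 : Module.End ℂ W) := if_neg hi0
      simp only [hcfdef, hDci, zero_lie, hc2i, hc2j2, hz1, hz2]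
      simp [Ring.lie_def]
  constructor
  · intro i j hi0 hj0
    have h := hcAll i j
    simp only [hcfdef, if_neg hi0, if_neg hj0, add_zero, sub_zero] at h
    have h2 : ⁅Dc i, Dc j⁆
        = (∑ l, ((j l : ℂ) * ε l) • Dc (i + j - Pi.single l 1))
          - (∑ l, ((i l : ℂ) * ε l) • Dc (i + j - Pi.single l 1)) := by
      calc ⁅Dc i, Dc j⁆
          = ⁅Dc i, Dc j⁆ - (∑ l, ((j l : ℂ) * ε l) • Dc (i + j - Pi.single l 1))
            + (∑ l, ((i l : ℂ) * ε l) • Dc (i + j - Pi.single l 1))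
            + ((∑ l, ((j l : ℂ) * ε l) • Dc (i + j - Pi.single l 1))
              - (∑ l, ((i l : ℂ) * ε l) • Dc (i + j - Pi.single l 1))) := by abel
        _ = (∑ l, ((j l : ℂ) * ε l) • Dc (i + j - Pi.single l 1))
            - (∑ l, ((i l : ℂ) * ε l) • Dc (i + j - Pi.single l 1)) := by
            rw [h, zero_add]
    rw [h2, ← Finset.sum_sub_distrib]
    apply Finset.sum_congr rfl
    intro l _
    rw [← sub_smul, ← sub_mul]
  · intro i j hij
    rcases hij with hi | hj
    · subst hi
      have h := hcAll 0 j
      simp only [hcfdef, eq_self_iff_true, if_true] at h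
      have e2 : (∑ l, (((0 : Fin k → ℕ) l : ℂ) * ε l) • Dc ((0 : Fin k → ℕ) + j - Pi.single l 1)) = (0 : Module.End ℂ W) := by
        apply Finset.sum_eq_zero
        intro l _
        simp
      have e3 : (∑ l, ((j l : ℂ) * ε l) • Dc ((0 : Fin k → ℕ) + j - Pi.single l 1)) = c2 j := by
        rw [hc2def]
        apply Finset.sum_congr rfl
        intro l _
        rw [zero_add]
      have e4 : (if j = 0 then c2 (0 : Fin k → ℕ) else 0) = 0 := by
        split_ifs with hj
        · rw [hc2def]
          apply Finset.sum_eq_zero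
          intro l _
          simp
        · rfl
      rw [e2, e3, e4] at h
      have : ⁅Dc 0, Dc j⁆ - c2 j + 0 + c2 j - 0 = ⁅Dc 0, Dc j⁆ := by abel
      rwa [this] at h
    · subst hj
      have h := hcAll i 0
      simp only [hcfdef, eq_self_iff_true, if_true] at h
      have e2 : (∑ l, (((0 : Fin k → ℕ) l : ℂ) * ε l) • Dc (i + (0 : Fin k → ℕ) - Pi.single l 1)) = (0 : Module.End ℂ W) := by
        apply Finset.sum_eq_zero
        intro l _
        simp
      have e3 : (∑ l, ((i l : ℂ) * ε l) • Dc (i + (0 : Fin k → ℕ) - Pi.single l 1)) = c2 i := by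
        rw [hc2def]
        apply Finset.sum_congr rfl
        intro l _
        rw [add_zero]
      have e4 : (if i = 0 then c2 (0 : Fin k → ℕ) else 0) = (0 : Module.End ℂ W) := by
        split_ifs with hi
        · rw [hc2def]
          apply Finset.sum_eq_zero
          intro l _
          simp
        · rfl
      rw [e2, e3, e4] at h
      have : ⁅Dc i, Dc 0⁆ - 0 + c2 i + 0 - c2 i = ⁅Dc i, Dc 0⁆ := by abel
      rwa [this] at h
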